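/- Let b : ℝ^d → ℝ^d and σ : ℝ^d → ℝ^{d×d} be globally Lipschitz with constant L, θ ∈ [0,1], T > 0, N ∈ ℕ⁺, h = T/N ≤ 1/(2L), and grid t_n = nh. For every continuous g : [0,T] → ℝ^m (here m = d) with g(0) = 0 there exists a unique continuous f : [0,T] → ℝ^d with f(0) = x₀ satisfying, on each interval [t_n, t_{n+1}] (n = 0,…,N−1), f(t) = f(t_n) + b((1−θ)f(t_n) + θ f(t_{n+1}))(t − t_n) + σ(f(t_n))(g(t) − g(t_n)). Moreover the solution map F^h : g ↦ f is continuous from C₀([0,T],ℝ^m) to C_{x₀}([0,T],ℝ^d) (both with the supremum norm); in fact, for each g₁ there is a constant K(g₁,h,x₀) such that ‖F^h(g₁) − F^h(g₂)‖₀ ≤ K(g₁,h,x₀) ‖g₁ − g₂‖₀ for all g₂ with ‖g₂ − g₁‖₀ ≤ 1. -/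

import Mathlib

open MeasureTheory Set
open scoped NNReal

section Aux
variable {E : Type*} [NormedAddCommGroup E] [NormedSpace ℝ E] [CompleteSpace E]

/-- Unique solvability of the implicit θ-step. -/
lemma theta_step_existsUnique (h θ : ℝ) (L : NNReal)
    (b : E → E) (hb : LipschitzWith L b)
    (hθ0 : 0 ≤ θ) (hθ1 : θ ≤ 1) (hh0 : 0 ≤ h) (hhL : h * (L : ℝ) ≤ 1 / 2)
    (x c : E) :
    ∃! y : E, y = x + h • b ((1 - θ) • x + θ • y) + c := by
  set Φ : E → E := fun y => x + h • b ((1 - θ) • x + θ • y) + c with hΦ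
  have hlip : LipschitzWith (1/2 : ℝ≥0) Φ := by
    apply LipschitzWith.of_dist_le_mul
    intro y z
    have e1 : Φ y - Φ z
        = h • (b ((1 - θ) • x + θ • y) - b ((1 - θ) • x + θ • z)) := by
      simp only [hΦ, smul_sub]; abel
    have e2 : ((1 - θ) • x + θ • y) - ((1 - θ) • x + θ • z) = θ • (y - z) := by
      rw [smul_sub]; abel
    have hbL : ‖b ((1 - θ) • x + θ • y) - b ((1 - θ) • x + θ • z)‖
        ≤ (L : ℝ) * ‖((1 - θ) • x + θ • y) - ((1 - θ) • x + θ • z)‖ := by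
      simpa [dist_eq_norm] using hb.dist_le_mul ((1 - θ) • x + θ • y) ((1 - θ) • x + θ • z)
    rw [e2, norm_smul, Real.norm_eq_abs, abs_of_nonneg hθ0] at hbL
    rw [dist_eq_norm, dist_eq_norm, e1, norm_smul, Real.norm_eq_abs, abs_of_nonneg hh0]
    have h2 : ((1/2 : ℝ≥0) : ℝ) = 1/2 := by norm_num
    rw [h2]
    have n0 : (0:ℝ) ≤ ‖y - z‖ := norm_nonneg _
    have t1 : (0:ℝ) ≤ (1/2 - h*(L:ℝ)) * (θ*‖y - z‖) :=
      mul_nonneg (by linarith) (mul_nonneg hθ0 n0)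
    have t2 : (0:ℝ) ≤ (1/2) * ((1-θ)*‖y - z‖) :=
      mul_nonneg (by norm_num) (mul_nonneg (by linarith) n0)
    nlinarith [mul_le_mul_of_nonneg_left hbL hh0]
  have hc : ContractingWith (1/2 : ℝ≥0) Φ := ⟨by rw [← NNReal.coe_lt_coe]; norm_num, hlip⟩
  refine ⟨ContractingWith.fixedPoint Φ hc, (hc.fixedPoint_isFixedPt).symm, fun y hy => ?_⟩
  exact hc.fixedPoint_unique hy.symm

/-- Pasting continuity on a union of two closed sets. -/
lemma continuousOn_union_of_isClosed' {X Y : Type*} [TopologicalSpace X] [TopologicalSpace Y]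
    {s t : Set X} {f : X → Y} (hs : IsClosed s) (ht : IsClosed t)
    (hfs : ContinuousOn f s) (hft : ContinuousOn f t) : ContinuousOn f (s ∪ t) := by
  intro x hx
  apply ContinuousWithinAt.union
  · by_cases hxs : x ∈ s
    · exact hfs x hxs
    · exact continuousWithinAt_of_notMem_closure (by rwa [hs.closure_eq])
  · by_cases hxt : x ∈ t
    · exact hft x hxt
    · exact continuousWithinAt_of_notMem_closure (by rwa [ht.closure_eq])

end Aux

def IsThetaInterp (d N : ℕ) (T θ : ℝ) (x₀ : EuclideanSpace ℝ (Fin d))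
    (b : EuclideanSpace ℝ (Fin d) → EuclideanSpace ℝ (Fin d))
    (σ : EuclideanSpace ℝ (Fin d) →
      (EuclideanSpace ℝ (Fin d) →L[ℝ] EuclideanSpace ℝ (Fin d)))
    (g f : ℝ → EuclideanSpace ℝ (Fin d)) : Prop :=
  ContinuousOn f (Icc 0 T) ∧ f 0 = x₀ ∧
  ∀ n : ℕ, n < N →
    ∀ t ∈ Icc ((n : ℝ) * (T / (N : ℝ))) (((n : ℝ) + 1) * (T / (N : ℝ))),
      f t = f ((n : ℝ) * (T / (N : ℝ)))
        + (t - (n : ℝ) * (T / (N : ℝ))) •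
            b ((1 - θ) • f ((n : ℝ) * (T / (N : ℝ)))
              + θ • f (((n : ℝ) + 1) * (T / (N : ℝ))))
        + (σ (f ((n : ℝ) * (T / (N : ℝ)))))
            (g t - g ((n : ℝ) * (T / (N : ℝ))))

set_option maxHeartbeats 1000000 in
/-- For `h = T/N ≤ 1/(2L)`, for every continuous `g` with `g(0) = 0` there
is a unique continuous `f` with `f(0) = x₀` solving the θ-method interpolation equation
driven by `g`; moreover the solution map `F^h : g ↦ f` is locally Lipschitz (hence
continuous) in the supremum norm: for each admissible `g₁` there is `K(g₁,h,x₀)` with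
`‖F^h(g₁) − F^h(g₂)‖₀ ≤ K ‖g₁ − g₂‖₀` whenever `‖g₂ − g₁‖₀ ≤ 1`. -/
theorem theta_method_solution_map_continuous
    (d : ℕ) (hd : 1 ≤ d) (T : ℝ) (hT : 0 < T)
    (x₀ : EuclideanSpace ℝ (Fin d)) (L : NNReal) (hL : 0 < L)
    (θ : ℝ) (hθ0 : 0 ≤ θ) (hθ1 : θ ≤ 1)
    (b : EuclideanSpace ℝ (Fin d) → EuclideanSpace ℝ (Fin d))
    (σ : EuclideanSpace ℝ (Fin d) →
      (EuclideanSpace ℝ (Fin d) →L[ℝ] EuclideanSpace ℝ (Fin d)))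
    (hb : LipschitzWith L b) (hσ : LipschitzWith L σ)
    (N : ℕ) (hN : 0 < N) (hh : T / (N : ℝ) ≤ 1 / (2 * (L : ℝ))) :
    (∀ g : ℝ → EuclideanSpace ℝ (Fin d),
      ContinuousOn g (Icc 0 T) → g 0 = 0 →
      ∃ f : ℝ → EuclideanSpace ℝ (Fin d), IsThetaInterp d N T θ x₀ b σ g f ∧
        ∀ f₂ : ℝ → EuclideanSpace ℝ (Fin d), IsThetaInterp d N T θ x₀ b σ g f₂ →
          EqOn f₂ f (Icc 0 T)) ∧
    (∀ g₁ f₁ : ℝ → EuclideanSpace ℝ (Fin d),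
      ContinuousOn g₁ (Icc 0 T) → g₁ 0 = 0 → IsThetaInterp d N T θ x₀ b σ g₁ f₁ →
      ∃ K : ℝ, 0 < K ∧
        ∀ g₂ f₂ : ℝ → EuclideanSpace ℝ (Fin d),
          ContinuousOn g₂ (Icc 0 T) → g₂ 0 = 0 → IsThetaInterp d N T θ x₀ b σ g₂ f₂ →
          (⨆ s : Icc (0 : ℝ) T, ‖g₂ s.1 - g₁ s.1‖) ≤ 1 →
          ∀ t ∈ Icc (0 : ℝ) T,
            ‖f₁ t - f₂ t‖ ≤ K * ⨆ s : Icc (0 : ℝ) T, ‖g₁ s.1 - g₂ s.1‖) := by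
  have hN0 : (0:ℝ) < (N:ℝ) := by exact_mod_cast hN
  set h : ℝ := T / (N : ℝ) with hdef
  have hh0 : 0 < h := div_pos hT hN0
  have hL0 : (0:ℝ) < (L:ℝ) := by exact_mod_cast hL
  have hNh : (N:ℝ) * h = T := by rw [hdef]; field_simp
  have hhL : h * (L:ℝ) ≤ 1/2 := by
    have heq : (1/(2*(L:ℝ))) * (L:ℝ) = 1/2 := by field_simp
    calc h * (L:ℝ) ≤ (1/(2*(L:ℝ))) * (L:ℝ) := mul_le_mul_of_nonneg_right hh hL0.le
      _ = 1/2 := heq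
  -- grid times lie in [0, T]
  have tmem : ∀ n : ℕ, n ≤ N → (n:ℝ) * h ∈ Icc (0:ℝ) T := by
    intro n hn
    constructor
    · positivity
    · calc (n:ℝ) * h ≤ (N:ℝ) * h := by
            apply mul_le_mul_of_nonneg_right _ hh0.le; exact_mod_cast hn
        _ = T := hNh
  -- every t in [0,T] lies in some grid interval
  have exists_idx : ∀ t ∈ Icc (0:ℝ) T, ∃ n : ℕ, n < N ∧
      (n:ℝ) * h ≤ t ∧ t ≤ ((n:ℝ)+1) * h := by
    intro t ht
    by_cases hc : (⌊t/h⌋).toNat < N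
    · refine ⟨(⌊t/h⌋).toNat, hc, ?_, ?_⟩
      · have h1 : (0:ℤ) ≤ ⌊t/h⌋ := Int.floor_nonneg.mpr (div_nonneg ht.1 hh0.le)
        have h2 : ((⌊t/h⌋).toNat : ℝ) = (⌊t/h⌋ : ℝ) := by
          exact_mod_cast Int.toNat_of_nonneg h1
        rw [h2, ← le_div_iff₀ hh0]
        exact Int.floor_le _
      · have h1 : (0:ℤ) ≤ ⌊t/h⌋ := Int.floor_nonneg.mpr (div_nonneg ht.1 hh0.le)
        have h2 : ((⌊t/h⌋).toNat : ℝ) = (⌊t/h⌋ : ℝ) := by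
          exact_mod_cast Int.toNat_of_nonneg h1
        rw [h2, ← div_le_iff₀ hh0]
        exact le_of_lt (by exact_mod_cast Int.lt_floor_add_one (t/h))
    · push_neg at hc
      have hc' : ((N:ℤ)) ≤ ⌊t/h⌋ := by omega
      have hNle : (N:ℝ) ≤ t / h := by exact_mod_cast Int.le_floor.mp hc'
      have hNt : (N:ℝ) * h ≤ t := by
        rw [← le_div_iff₀ hh0]; exact hNle
      have hcast : ((N - 1 : ℕ) : ℝ) = (N:ℝ) - 1 := by
        have h1 : (1:ℕ) ≤ N := hN
        push_cast [h1]; ring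
      refine ⟨N - 1, by omega, ?_, ?_⟩
      · rw [hcast]
        have : ((N:ℝ)-1)*h = (N:ℝ)*h - h := by ring
        rw [this]; linarith
      · rw [hcast]
        have : ((N:ℝ)-1+1)*h = (N:ℝ)*h := by ring
        rw [this, hNh]; exact ht.2
  choose next hnext1 hnext2 using fun x c =>
    theta_step_existsUnique h θ L b hb hθ0 hθ1 hh0.le hhL x c
  constructor
  · -- Existence and uniqueness
    intro g hg hg0
    set y : ℕ → EuclideanSpace ℝ (Fin d) :=
      fun n => Nat.rec x₀ (fun n yn => next yn (σ yn (g (((n:ℝ)+1)*h) - g ((n:ℝ)*h)))) n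
      with hy
    have ysucc : ∀ n : ℕ, y (n+1) = next (y n) (σ (y n) (g (((n:ℝ)+1)*h) - g ((n:ℝ)*h))) :=
      fun n => rfl
    set P : ℕ → ℝ → EuclideanSpace ℝ (Fin d) := fun n t =>
      y n + (t - (n:ℝ)*h) • b ((1-θ) • y n + θ • y (n+1)) + σ (y n) (g t - g ((n:ℝ)*h))
      with hP
    have Pleft : ∀ n : ℕ, P n ((n:ℝ)*h) = y n := by
      intro n; simp [hP]
    have Pright : ∀ n : ℕ, P n (((n:ℝ)+1)*h) = y (n+1) := by
      intro n
      have hstep : ((n:ℝ)+1)*h - (n:ℝ)*h = h := by ring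
      have hfix := hnext1 (y n) (σ (y n) (g (((n:ℝ)+1)*h) - g ((n:ℝ)*h)))
      rw [← ysucc n] at hfix
      simp only [hP, hstep]
      exact hfix.symm
    set f : ℝ → EuclideanSpace ℝ (Fin d) :=
      fun t => P (min ((⌊t/h⌋).toNat) (N-1)) t with hf
    have fP : ∀ n : ℕ, n < N → ∀ t : ℝ, (n:ℝ)*h ≤ t → t ≤ ((n:ℝ)+1)*h → f t = P n t := by
      intro n hn t h1 h2
      rcases eq_or_lt_of_le h2 with heq | hlt
      · subst heq
        have hdiv : (((n:ℝ)+1)*h)/h = ((n:ℝ)+1) := by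
          field_simp
        have hfl : ⌊(((n:ℝ)+1)*h)/h⌋ = (n:ℤ) + 1 := by
          rw [hdiv]
          have : ((n:ℝ)+1) = (((n:ℤ)+1 : ℤ) : ℝ) := by push_cast; ring
          rw [this, Int.floor_intCast]
        rw [hf]
        simp only [hfl]
        have htn : ((n:ℤ)+1).toNat = n + 1 := by omega
        rw [htn]
        rcases Nat.lt_or_ge (n+1) N with hlt2 | hge2
        · have hmin : min (n+1) (N-1) = n+1 := by omega
          rw [hmin]
          have hc1 : (((n+1:ℕ)):ℝ) = (n:ℝ)+1 := by push_cast; ring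
          have := Pleft (n+1)
          rw [hc1] at this
          rw [this, Pright n]
        · have hmin : min (n+1) (N-1) = n := by omega
          rw [hmin]
      · have hfl : ⌊t/h⌋ = (n:ℤ) := by
          rw [Int.floor_eq_iff]
          constructor
          · push_cast
            rw [le_div_iff₀ hh0]
            linarith
          · push_cast
            rw [div_lt_iff₀ hh0]
            linarith
        rw [hf]
        simp only [hfl]
        have htn : ((n:ℤ)).toNat = n := by omega
        rw [htn]
        have hmin : min n (N-1) = n := by omega
        rw [hmin]
    have hPcont : ∀ n : ℕ, ContinuousOn (P n) (Icc 0 T) := by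
      intro n
      simp only [hP]
      apply ContinuousOn.add
      · apply ContinuousOn.add continuousOn_const
        exact (continuousOn_id.sub continuousOn_const).smul continuousOn_const
      · exact (σ (y n)).continuous.comp_continuousOn (hg.sub continuousOn_const)
    have conts : ∀ n : ℕ, n ≤ N → ContinuousOn f (Icc 0 ((n:ℝ)*h)) := by
      intro n
      induction n with
      | zero =>
        intro _
        simp only [Nat.cast_zero, zero_mul]
        rw [Icc_self]
        exact continuousOn_singleton _ _
      | succ n ih =>
        intro hn1
        have hn : n < N := by omega
        have hcast : ((n+1:ℕ):ℝ) = (n:ℝ)+1 := by push_cast; ring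
        rw [hcast]
        have hsplit : Icc (0:ℝ) (((n:ℝ)+1)*h) = Icc 0 ((n:ℝ)*h) ∪ Icc ((n:ℝ)*h) (((n:ℝ)+1)*h) :=
          (Icc_union_Icc_eq_Icc (by positivity) (by nlinarith)).symm
        rw [hsplit]
        apply continuousOn_union_of_isClosed' isClosed_Icc isClosed_Icc (ih (by omega))
        apply ContinuousOn.congr ((hPcont n).mono ?_) ?_
        · apply Icc_subset_Icc
          · positivity
          · have := (tmem (n+1) hn1).2
            rwa [hcast] at this
        · intro t ht
          exact fP n hn t ht.1 ht.2
    have hf0 : f 0 = x₀ := by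
      have h0N : 0 < N := hN
      have := fP 0 h0N 0 (by simp) (by simp; positivity)
      have hz : ((0:ℕ):ℝ)*h = 0 := by simp
      rw [this, ← hz, Pleft]
      rfl
    have hfcont : ContinuousOn f (Icc 0 T) := by
      have := conts N le_rfl
      rwa [hNh] at this
    have hfgrid : ∀ n : ℕ, n ≤ N → f ((n:ℝ)*h) = y n := by
      intro n hn
      rcases Nat.lt_or_ge n N with hlt | hge
      · rw [fP n hlt _ le_rfl (by nlinarith), Pleft]
      · have hnN : n = N := by omega
        subst hnN
        have hn1 : (n - 1 : ℕ) < n := by omega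
        have hc : (((n-1:ℕ)):ℝ) = (n:ℝ) - 1 := by
          have h1 : (1:ℕ) ≤ n := hN
          push_cast [h1]; ring
        have he : (((n-1:ℕ)):ℝ) + 1 = (n:ℝ) := by rw [hc]; ring
        have := fP (n-1) (by omega) ((n:ℝ)*h)
          (by rw [hc]; nlinarith) (by rw [he])
        have hnn : (n-1)+1 = n := by omega
        rw [this, ← he, Pright, hnn]
    have hfeq : ∀ n : ℕ, n < N →
        ∀ t ∈ Icc ((n:ℝ)*h) (((n:ℝ)+1)*h),
          f t = f ((n:ℝ)*h) + (t - (n:ℝ)*h) • b ((1-θ) • f ((n:ℝ)*h) + θ • f (((n:ℝ)+1)*h))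
            + σ (f ((n:ℝ)*h)) (g t - g ((n:ℝ)*h)) := by
      intro n hn t ht
      have e1 : f ((n:ℝ)*h) = y n := hfgrid n hn.le
      have e2 : f (((n:ℝ)+1)*h) = y (n+1) := by
        have hc : (((n+1:ℕ)):ℝ) = (n:ℝ)+1 := by push_cast; ring
        have := hfgrid (n+1) hn
        rwa [hc] at this
      rw [fP n hn t ht.1 ht.2, e1, e2]
    refine ⟨f, ⟨hfcont, hf0, ?_⟩, ?_⟩
    · intro n hn t ht
      rw [← hdef]
      rw [← hdef] at ht
      exact hfeq n hn t ht
    · -- uniqueness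
      intro f₂ hf₂
      obtain ⟨hf₂c, hf₂0, hf₂eq⟩ := hf₂
      simp only [← hdef] at hf₂eq
      have grid : ∀ n : ℕ, n ≤ N → f₂ ((n:ℝ)*h) = y n := by
        intro n
        induction n with
        | zero => intro _; simp only [Nat.cast_zero, zero_mul]; exact hf₂0
        | succ n ih =>
          intro hn1
          have hn : n < N := by omega
          have ihn := ih (by omega)
          have heq := hf₂eq n hn (((n:ℝ)+1)*h) ⟨by nlinarith, le_rfl⟩
          rw [ihn] at heq
          have hstep : ((n:ℝ)+1)*h - (n:ℝ)*h = h := by ring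
          rw [hstep] at heq
          have := hnext2 (y n) (σ (y n) (g (((n:ℝ)+1)*h) - g ((n:ℝ)*h))) _ heq
          have hc : (((n+1:ℕ)):ℝ) = (n:ℝ)+1 := by push_cast; ring
          rw [hc, this, ← ysucc n]
      intro t ht
      obtain ⟨n, hn, h1, h2⟩ := exists_idx t ht
      have e2 := hf₂eq n hn t ⟨h1, h2⟩
      have hc : (((n+1:ℕ)):ℝ) = (n:ℝ)+1 := by push_cast; ring
      have g1 := grid n hn.le
      have g2 : f₂ (((n:ℝ)+1)*h) = y (n+1) := by
        have := grid (n+1) hn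
        rwa [hc] at this
      rw [g1, g2] at e2
      rw [e2, fP n hn t h1 h2]
  · -- Local Lipschitz continuity of the solution map
    intro g₁ f₁ hg₁ hg₁0 hf₁
    obtain ⟨hf₁c, hf₁0, hf₁eq⟩ := hf₁
    simp only [← hdef] at hf₁eq
    have hne : Set.Nonempty (Icc (0:ℝ) T) := ⟨0, le_rfl, hT.le⟩
    obtain ⟨xG, hxG, hGmax⟩ := isCompact_Icc.exists_isMaxOn hne hg₁.norm
    set G := ‖g₁ xG‖ with hGdef
    have hG : ∀ u ∈ Icc (0:ℝ) T, ‖g₁ u‖ ≤ G := fun u hu => hGmax hu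
    have hG0 : 0 ≤ G := norm_nonneg _
    have hσf : ContinuousOn (fun u => ‖σ (f₁ u)‖) (Icc 0 T) :=
      (hσ.continuous.comp_continuousOn hf₁c).norm
    obtain ⟨xM, hxM, hMmax⟩ := isCompact_Icc.exists_isMaxOn hne hσf
    set M := ‖σ (f₁ xM)‖ with hMdef
    have hM : ∀ u ∈ Icc (0:ℝ) T, ‖σ (f₁ u)‖ ≤ M := fun u hu => hMmax hu
    have hM0 : 0 ≤ M := norm_nonneg _
    set C : ℝ := 3 + 2*(L:ℝ)*(2*G+2) + 4*M with hCdef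
    have hC1 : (1:ℝ) ≤ C := by nlinarith [hL0.le, mul_nonneg hL0.le hG0]
    have hC0 : (0:ℝ) ≤ C := by linarith
    set A : ℝ := (N:ℝ) * C^N with hAdef
    have hA0 : (0:ℝ) ≤ A := by
      rw [hAdef]; positivity
    set K : ℝ := A * (2 + (L:ℝ)*(2*G+2)) + 2*M + 1 with hKdef
    have hK : 0 < K := by nlinarith [mul_nonneg hL0.le hG0, mul_nonneg hA0 (mul_nonneg hL0.le hG0), mul_nonneg hA0 hL0.le]
    refine ⟨K, hK, ?_⟩
    intro g₂ f₂ hg₂ hg₂0 hf₂ hclose t ht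
    obtain ⟨hf₂c, hf₂0, hf₂eq⟩ := hf₂
    simp only [← hdef] at hf₂eq
    set δ : ℝ := ⨆ s : Icc (0:ℝ) T, ‖g₁ s.1 - g₂ s.1‖ with hδdef
    have hcont12 : Continuous (fun s : Icc (0:ℝ) T => ‖g₁ s.1 - g₂ s.1‖) :=
      continuousOn_iff_continuous_restrict.mp ((hg₁.sub hg₂).norm)
    have hbdd : BddAbove (range fun s : Icc (0:ℝ) T => ‖g₁ s.1 - g₂ s.1‖) :=
      (isCompact_range hcont12).bddAbove
    have hδle : ∀ u ∈ Icc (0:ℝ) T, ‖g₁ u - g₂ u‖ ≤ δ := fun u hu =>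
      le_ciSup hbdd (⟨u, hu⟩ : Icc (0:ℝ) T)
    have hδ0 : 0 ≤ δ := le_trans (norm_nonneg _) (hδle 0 ⟨le_rfl, hT.le⟩)
    have hδ1 : δ ≤ 1 := by
      have hfe : (fun s : Icc (0:ℝ) T => ‖g₂ s.1 - g₁ s.1‖)
          = fun s : Icc (0:ℝ) T => ‖g₁ s.1 - g₂ s.1‖ := funext fun s => norm_sub_rev _ _
      rw [hδdef, ← hfe]
      exact hclose
    have hbL : ∀ u v : EuclideanSpace ℝ (Fin d), ‖b u - b v‖ ≤ (L:ℝ) * ‖u - v‖ := fun u v => by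
      have := hb.dist_le_mul u v
      rwa [dist_eq_norm, dist_eq_norm] at this
    have hσL : ∀ u v : EuclideanSpace ℝ (Fin d), ‖σ u - σ v‖ ≤ (L:ℝ) * ‖u - v‖ := fun u v => by
      have := hσ.dist_le_mul u v
      rwa [dist_eq_norm, dist_eq_norm] at this
    have hstep : ∀ n : ℕ, ((n:ℝ)+1)*h - (n:ℝ)*h = h := fun n => by ring
    have rel₁ : ∀ n : ℕ, n < N → f₁ (((n:ℝ)+1)*h) = f₁ ((n:ℝ)*h)
        + h • b ((1-θ) • f₁ ((n:ℝ)*h) + θ • f₁ (((n:ℝ)+1)*h))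
        + σ (f₁ ((n:ℝ)*h)) (g₁ (((n:ℝ)+1)*h) - g₁ ((n:ℝ)*h)) := by
      intro n hn
      have := hf₁eq n hn (((n:ℝ)+1)*h) ⟨by nlinarith, le_rfl⟩
      rwa [hstep n] at this
    have rel₂ : ∀ n : ℕ, n < N → f₂ (((n:ℝ)+1)*h) = f₂ ((n:ℝ)*h)
        + h • b ((1-θ) • f₂ ((n:ℝ)*h) + θ • f₂ (((n:ℝ)+1)*h))
        + σ (f₂ ((n:ℝ)*h)) (g₂ (((n:ℝ)+1)*h) - g₂ ((n:ℝ)*h)) := by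
      intro n hn
      have := hf₂eq n hn (((n:ℝ)+1)*h) ⟨by nlinarith, le_rfl⟩
      rwa [hstep n] at this
    -- generic one-interval estimate
    have keybound : ∀ n : ℕ, n < N → ∀ s : ℝ, (n:ℝ)*h ≤ s → s ≤ ((n:ℝ)+1)*h →
        ‖f₁ s - f₂ s‖ ≤ ‖f₁ ((n:ℝ)*h) - f₂ ((n:ℝ)*h)‖
          + (s - (n:ℝ)*h) * ((L:ℝ) * ((1-θ) * ‖f₁ ((n:ℝ)*h) - f₂ ((n:ℝ)*h)‖
              + θ * ‖f₁ (((n:ℝ)+1)*h) - f₂ (((n:ℝ)+1)*h)‖))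
          + (M*(2*δ) + ((L:ℝ) * ‖f₁ ((n:ℝ)*h) - f₂ ((n:ℝ)*h)‖) * (2*G+2)) := by
      intro n hn s hs1 hs2
      have hm1 : (n:ℝ)*h ∈ Icc (0:ℝ) T := tmem n hn.le
      have hm2 : ((n:ℝ)+1)*h ∈ Icc (0:ℝ) T := by
        have := tmem (n+1) hn
        rwa [show (((n+1:ℕ)):ℝ) = (n:ℝ)+1 by push_cast; ring] at this
      have hms : s ∈ Icc (0:ℝ) T := ⟨le_trans hm1.1 hs1, le_trans hs2 hm2.2⟩
      have e1 := hf₁eq n hn s ⟨hs1, hs2⟩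
      have e2 := hf₂eq n hn s ⟨hs1, hs2⟩
      set u₁ := (1-θ) • f₁ ((n:ℝ)*h) + θ • f₁ (((n:ℝ)+1)*h) with hu₁
      set u₂ := (1-θ) • f₂ ((n:ℝ)*h) + θ • f₂ (((n:ℝ)+1)*h) with hu₂
      set w₁ := g₁ s - g₁ ((n:ℝ)*h) with hw₁
      set w₂ := g₂ s - g₂ ((n:ℝ)*h) with hw₂
      set Δ := f₁ ((n:ℝ)*h) - f₂ ((n:ℝ)*h) with hΔ
      set Δ' := f₁ (((n:ℝ)+1)*h) - f₂ (((n:ℝ)+1)*h) with hΔ'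
      have iden : f₁ s - f₂ s = Δ + (s - (n:ℝ)*h) • (b u₁ - b u₂)
          + (σ (f₁ ((n:ℝ)*h)) w₁ - σ (f₂ ((n:ℝ)*h)) w₂) := by
        rw [e1, e2, hΔ, smul_sub]
        abel
      have nb : ‖b u₁ - b u₂‖ ≤ (L:ℝ) * ((1-θ) * ‖Δ‖ + θ * ‖Δ'‖) := by
        have h2 : u₁ - u₂ = (1-θ) • Δ + θ • Δ' := by
          rw [hu₁, hu₂, hΔ, hΔ', smul_sub, smul_sub]; abel
        calc ‖b u₁ - b u₂‖ ≤ (L:ℝ) * ‖u₁ - u₂‖ := hbL u₁ u₂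
          _ = (L:ℝ) * ‖(1-θ) • Δ + θ • Δ'‖ := by rw [h2]
          _ ≤ (L:ℝ) * ((1-θ) * ‖Δ‖ + θ * ‖Δ'‖) := by
              apply mul_le_mul_of_nonneg_left _ hL0.le
              calc ‖(1-θ) • Δ + θ • Δ'‖ ≤ ‖(1-θ) • Δ‖ + ‖θ • Δ'‖ := norm_add_le _ _
                _ = (1-θ) * ‖Δ‖ + θ * ‖Δ'‖ := by
                    rw [norm_smul, norm_smul, Real.norm_eq_abs, Real.norm_eq_abs,
                      abs_of_nonneg (by linarith : (0:ℝ) ≤ 1-θ), abs_of_nonneg hθ0]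
      have hw12 : ‖w₁ - w₂‖ ≤ 2*δ := by
        have e : w₁ - w₂ = (g₁ s - g₂ s) - (g₁ ((n:ℝ)*h) - g₂ ((n:ℝ)*h)) := by
          rw [hw₁, hw₂]; abel
        calc ‖w₁ - w₂‖ = ‖(g₁ s - g₂ s) - (g₁ ((n:ℝ)*h) - g₂ ((n:ℝ)*h))‖ := by rw [e]
          _ ≤ ‖g₁ s - g₂ s‖ + ‖g₁ ((n:ℝ)*h) - g₂ ((n:ℝ)*h)‖ := norm_sub_le _ _
          _ ≤ δ + δ := add_le_add (hδle s hms) (hδle _ hm1)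
          _ = 2*δ := by ring
      have hw2 : ‖w₂‖ ≤ 2*G + 2 := by
        have e : w₂ = ((g₂ s - g₁ s) + (g₁ ((n:ℝ)*h) - g₂ ((n:ℝ)*h))) + (g₁ s - g₁ ((n:ℝ)*h)) := by
          rw [hw₂]; abel
        have h1 : ‖g₂ s - g₁ s‖ ≤ δ := by rw [norm_sub_rev]; exact hδle s hms
        calc ‖w₂‖ = ‖((g₂ s - g₁ s) + (g₁ ((n:ℝ)*h) - g₂ ((n:ℝ)*h))) + (g₁ s - g₁ ((n:ℝ)*h))‖ := by rw [e]
          _ ≤ ‖(g₂ s - g₁ s) + (g₁ ((n:ℝ)*h) - g₂ ((n:ℝ)*h))‖ + ‖g₁ s - g₁ ((n:ℝ)*h)‖ := norm_add_le _ _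
          _ ≤ (‖g₂ s - g₁ s‖ + ‖g₁ ((n:ℝ)*h) - g₂ ((n:ℝ)*h)‖) + (‖g₁ s‖ + ‖g₁ ((n:ℝ)*h)‖) :=
              add_le_add (norm_add_le _ _) (norm_sub_le _ _)
          _ ≤ (δ + δ) + (G + G) :=
              add_le_add (add_le_add h1 (hδle _ hm1)) (add_le_add (hG s hms) (hG _ hm1))
          _ ≤ 2*G + 2 := by linarith
      have nσ : ‖σ (f₁ ((n:ℝ)*h)) w₁ - σ (f₂ ((n:ℝ)*h)) w₂‖
          ≤ M*(2*δ) + ((L:ℝ) * ‖Δ‖) * (2*G+2) := by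
        have e : σ (f₁ ((n:ℝ)*h)) w₁ - σ (f₂ ((n:ℝ)*h)) w₂
            = σ (f₁ ((n:ℝ)*h)) (w₁ - w₂) + (σ (f₁ ((n:ℝ)*h)) - σ (f₂ ((n:ℝ)*h))) w₂ := by
          rw [map_sub (σ (f₁ ((n:ℝ)*h))) w₁ w₂, ContinuousLinearMap.sub_apply]
          abel
        have t1 : ‖σ (f₁ ((n:ℝ)*h)) (w₁ - w₂)‖ ≤ M * (2*δ) := by
          calc ‖σ (f₁ ((n:ℝ)*h)) (w₁ - w₂)‖ ≤ ‖σ (f₁ ((n:ℝ)*h))‖ * ‖w₁ - w₂‖ :=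
                (σ (f₁ ((n:ℝ)*h))).le_opNorm _
            _ ≤ M * (2*δ) := mul_le_mul (hM _ hm1) hw12 (norm_nonneg _) hM0
        have t2 : ‖(σ (f₁ ((n:ℝ)*h)) - σ (f₂ ((n:ℝ)*h))) w₂‖ ≤ ((L:ℝ) * ‖Δ‖) * (2*G+2) := by
          calc ‖(σ (f₁ ((n:ℝ)*h)) - σ (f₂ ((n:ℝ)*h))) w₂‖
              ≤ ‖σ (f₁ ((n:ℝ)*h)) - σ (f₂ ((n:ℝ)*h))‖ * ‖w₂‖ :=
                (σ (f₁ ((n:ℝ)*h)) - σ (f₂ ((n:ℝ)*h))).le_opNorm _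
            _ ≤ ((L:ℝ) * ‖Δ‖) * (2*G+2) := by
                apply mul_le_mul (by rw [hΔ]; exact hσL _ _) hw2 (norm_nonneg _)
                exact mul_nonneg hL0.le (norm_nonneg _)
        calc ‖σ (f₁ ((n:ℝ)*h)) w₁ - σ (f₂ ((n:ℝ)*h)) w₂‖
            = ‖σ (f₁ ((n:ℝ)*h)) (w₁ - w₂) + (σ (f₁ ((n:ℝ)*h)) - σ (f₂ ((n:ℝ)*h))) w₂‖ := by rw [e]
          _ ≤ ‖σ (f₁ ((n:ℝ)*h)) (w₁ - w₂)‖ + ‖(σ (f₁ ((n:ℝ)*h)) - σ (f₂ ((n:ℝ)*h))) w₂‖ :=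
              norm_add_le _ _
          _ ≤ M*(2*δ) + ((L:ℝ) * ‖Δ‖) * (2*G+2) := add_le_add t1 t2
      calc ‖f₁ s - f₂ s‖
          = ‖Δ + (s - (n:ℝ)*h) • (b u₁ - b u₂) + (σ (f₁ ((n:ℝ)*h)) w₁ - σ (f₂ ((n:ℝ)*h)) w₂)‖ := by
            rw [iden]
        _ ≤ ‖Δ‖ + ‖(s - (n:ℝ)*h) • (b u₁ - b u₂)‖
              + ‖σ (f₁ ((n:ℝ)*h)) w₁ - σ (f₂ ((n:ℝ)*h)) w₂‖ := norm_add₃_le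
        _ ≤ ‖Δ‖ + (s - (n:ℝ)*h) * ((L:ℝ) * ((1-θ) * ‖Δ‖ + θ * ‖Δ'‖))
              + (M*(2*δ) + ((L:ℝ) * ‖Δ‖) * (2*G+2)) := by
            apply add_le_add (add_le_add le_rfl _) nσ
            rw [norm_smul, Real.norm_eq_abs, abs_of_nonneg (by linarith : (0:ℝ) ≤ s - (n:ℝ)*h)]
            exact mul_le_mul_of_nonneg_left nb (by linarith)
    have ebound : ∀ n : ℕ, n ≤ N → ‖f₁ ((n:ℝ)*h) - f₂ ((n:ℝ)*h)‖ ≤ (n:ℝ) * C^n * δ := by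
      intro n
      induction n with
      | zero =>
        intro _
        simp only [Nat.cast_zero, zero_mul]
        rw [hf₁0, hf₂0]
        simp
      | succ n ih =>
        intro hn1
        have hn : n < N := by omega
        have ihe := ih (by omega)
        have kb := keybound n hn (((n:ℝ)+1)*h) (by nlinarith) le_rfl
        rw [hstep n] at kb
        have hLθ0 : 0 ≤ h*(L:ℝ)*θ := mul_nonneg (mul_nonneg hh0.le hL0.le) hθ0
        have hb1 : h*(L:ℝ)*(1-θ) ≤ 1/2 := by nlinarith [hLθ0]
        have hb2 : h*(L:ℝ)*θ ≤ 1/2 := by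
          nlinarith [mul_nonneg (mul_nonneg hh0.le hL0.le) (sub_nonneg.mpr hθ1)]
        have e0 : (0:ℝ) ≤ ‖f₁ ((n:ℝ)*h) - f₂ ((n:ℝ)*h)‖ := norm_nonneg _
        have e0' : (0:ℝ) ≤ ‖f₁ (((n:ℝ)+1)*h) - f₂ (((n:ℝ)+1)*h)‖ := norm_nonneg _
        have k1 := mul_le_mul_of_nonneg_right hb1 e0
        have k2 := mul_le_mul_of_nonneg_right hb2 e0'
        have kexp : h * ((L:ℝ)*((1-θ) * ‖f₁ ((n:ℝ)*h) - f₂ ((n:ℝ)*h)‖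
              + θ * ‖f₁ (((n:ℝ)+1)*h) - f₂ (((n:ℝ)+1)*h)‖))
            = (h*(L:ℝ)*(1-θ)) * ‖f₁ ((n:ℝ)*h) - f₂ ((n:ℝ)*h)‖
              + (h*(L:ℝ)*θ) * ‖f₁ (((n:ℝ)+1)*h) - f₂ (((n:ℝ)+1)*h)‖ := by ring
        have cexp : C * ‖f₁ ((n:ℝ)*h) - f₂ ((n:ℝ)*h)‖ + C * δ
            = 3 * ‖f₁ ((n:ℝ)*h) - f₂ ((n:ℝ)*h)‖
              + 2*(L:ℝ)*(2*G+2) * ‖f₁ ((n:ℝ)*h) - f₂ ((n:ℝ)*h)‖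
              + 4*M * ‖f₁ ((n:ℝ)*h) - f₂ ((n:ℝ)*h)‖
              + 3*δ + 2*(L:ℝ)*(2*G+2)*δ + 4*M*δ := by rw [hCdef]; ring
        have hrec : ‖f₁ (((n:ℝ)+1)*h) - f₂ (((n:ℝ)+1)*h)‖
            ≤ C * ‖f₁ ((n:ℝ)*h) - f₂ ((n:ℝ)*h)‖ + C * δ := by
          linarith [kb, k1, k2, kexp, cexp, mul_nonneg hM0 e0,
            mul_nonneg (mul_nonneg hL0.le hG0) hδ0, mul_nonneg hL0.le hδ0,
            mul_nonneg (mul_nonneg hL0.le hG0) e0, mul_nonneg hL0.le e0]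
        have hcast : (((n+1:ℕ)):ℝ) = (n:ℝ)+1 := by push_cast; ring
        rw [hcast]
        have hCpow : C ≤ C^(n+1) := le_self_pow₀ hC1 (Nat.succ_ne_zero n)
        have p1 := mul_le_mul_of_nonneg_left ihe hC0
        have p2 : C*((n:ℝ)*C^n*δ) = (n:ℝ)*C^(n+1)*δ := by rw [pow_succ]; ring
        have p3 := mul_le_mul_of_nonneg_right hCpow hδ0
        linarith [hrec, p1, p2, p3]
    obtain ⟨n, hn, ht1, ht2⟩ := exists_idx t ht
    have kb := keybound n hn t ht1 ht2
    have eΔ := ebound n hn.le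
    have hcast : (((n+1:ℕ)):ℝ) = (n:ℝ)+1 := by push_cast; ring
    have eΔ' := ebound (n+1) hn
    rw [hcast] at eΔ'
    have hCN1 : C^n ≤ C^N := pow_le_pow_right₀ hC1 hn.le
    have hCN2 : C^(n+1) ≤ C^N := pow_le_pow_right₀ hC1 hn
    have hncast1 : ((n:ℝ)) ≤ (N:ℝ) := by exact_mod_cast hn.le
    have hncast2 : ((n:ℝ)+1) ≤ (N:ℝ) := by exact_mod_cast Nat.succ_le_of_lt hn
    have hA1 : (n:ℝ) * C^n * δ ≤ A*δ := by
      rw [hAdef]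
      apply mul_le_mul_of_nonneg_right _ hδ0
      exact mul_le_mul hncast1 hCN1 (pow_nonneg hC0 n) (Nat.cast_nonneg N)
    have hA2 : ((n:ℝ)+1) * C^(n+1) * δ ≤ A*δ := by
      rw [hAdef]
      apply mul_le_mul_of_nonneg_right _ hδ0
      exact mul_le_mul hncast2 hCN2 (pow_nonneg hC0 _) (Nat.cast_nonneg N)
    have hD1 : ‖f₁ ((n:ℝ)*h) - f₂ ((n:ℝ)*h)‖ ≤ A*δ := le_trans eΔ hA1
    have hD2 : ‖f₁ (((n:ℝ)+1)*h) - f₂ (((n:ℝ)+1)*h)‖ ≤ A*δ := le_trans eΔ' hA2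
    have hsnn : 0 ≤ t - (n:ℝ)*h := by linarith
    have hsL : (t - (n:ℝ)*h) * (L:ℝ) ≤ 1/2 := by
      have h4 : t - (n:ℝ)*h ≤ h := by
        have hexp : ((n:ℝ)+1)*h = (n:ℝ)*h + h := by ring
        linarith [ht2, hexp]
      have h5 := mul_le_mul_of_nonneg_right h4 hL0.le
      linarith [h5, hhL]
    have hXnn : 0 ≤ (1-θ) * ‖f₁ ((n:ℝ)*h) - f₂ ((n:ℝ)*h)‖
        + θ * ‖f₁ (((n:ℝ)+1)*h) - f₂ (((n:ℝ)+1)*h)‖ :=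
      add_nonneg (mul_nonneg (by linarith) (norm_nonneg _)) (mul_nonneg hθ0 (norm_nonneg _))
    have hXb : (1-θ) * ‖f₁ ((n:ℝ)*h) - f₂ ((n:ℝ)*h)‖
        + θ * ‖f₁ (((n:ℝ)+1)*h) - f₂ (((n:ℝ)+1)*h)‖ ≤ A*δ := by
      linarith [mul_le_mul_of_nonneg_left hD1 (by linarith : (0:ℝ) ≤ 1-θ),
        mul_le_mul_of_nonneg_left hD2 hθ0]
    have hmid : (t - (n:ℝ)*h) * ((L:ℝ) * ((1-θ) * ‖f₁ ((n:ℝ)*h) - f₂ ((n:ℝ)*h)‖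
        + θ * ‖f₁ (((n:ℝ)+1)*h) - f₂ (((n:ℝ)+1)*h)‖)) ≤ (1/2) * (A*δ) := by
      calc (t - (n:ℝ)*h) * ((L:ℝ) * ((1-θ) * ‖f₁ ((n:ℝ)*h) - f₂ ((n:ℝ)*h)‖
            + θ * ‖f₁ (((n:ℝ)+1)*h) - f₂ (((n:ℝ)+1)*h)‖))
          = ((t - (n:ℝ)*h) * (L:ℝ)) * ((1-θ) * ‖f₁ ((n:ℝ)*h) - f₂ ((n:ℝ)*h)‖
            + θ * ‖f₁ (((n:ℝ)+1)*h) - f₂ (((n:ℝ)+1)*h)‖) := by ring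
        _ ≤ (1/2) * ((1-θ) * ‖f₁ ((n:ℝ)*h) - f₂ ((n:ℝ)*h)‖
            + θ * ‖f₁ (((n:ℝ)+1)*h) - f₂ (((n:ℝ)+1)*h)‖) :=
            mul_le_mul_of_nonneg_right hsL hXnn
        _ ≤ (1/2) * (A*δ) := by linarith [hXb]
    have hlast : ((L:ℝ) * ‖f₁ ((n:ℝ)*h) - f₂ ((n:ℝ)*h)‖) * (2*G+2)
        ≤ ((L:ℝ) * (A*δ)) * (2*G+2) := by
      apply mul_le_mul_of_nonneg_right _ (by linarith)
      exact mul_le_mul_of_nonneg_left hD1 hL0.le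
    have kexp2 : K*δ = 2*(A*δ) + ((L:ℝ)*(A*δ))*(2*G+2) + 2*M*δ + δ := by
      rw [hKdef]; ring
    linarith [kb, hmid, hD1, hlast, kexp2, mul_nonneg hA0 hδ0, hδ0]
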